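/- Let f_j(x) be the probability that a biased random walk starting at 1 (left with probability x, right with probability 1-x) reaches 0 within j steps, and f(x) = min(1, x/(1-x)) (with f(1) = 1). Then f_j is nondecreasing in j, f_j(x) → f(x) pointwise, and for every ε > 0 there exists k such that for all j > k and all x ∈ (0, 1], f_j(x) > (1-ε) f(x). -/

import Mathlib

/-- Position of the walk after `t` steps: start at 1; each `true` step moves left by 1,
each `false` step moves right by 1. -/
def walkPos (j : ℕ) (ω : Fin j → Bool) (t : ℕ) : ℤ :=
  1 + ∑ i ∈ Finset.univ.filter (fun i : Fin j => (i : ℕ) < t),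
    (if ω i then (-1 : ℤ) else 1)

/-- The walk reaches 0 within `j` steps. -/
def hitsZero (j : ℕ) (ω : Fin j → Bool) : Prop := ∃ t ≤ j, walkPos j ω t = 0

open Classical in
/-- Probability that the walk with independent left-probabilities `p i` hits 0 within
`j` steps. -/
noncomputable def walkHitProb (j : ℕ) (p : Fin j → ℝ) : ℝ :=
  ∑ ω : Fin j → Bool, (∏ i, if ω i then p i else 1 - p i) *
    (if hitsZero j ω then (1 : ℝ) else 0)

/-- f_j(x): probability that the biased walk (left with probability x) started at 1
hits 0 within j steps. -/
noncomputable def fstep (j : ℕ) (x : ℝ) : ℝ := walkHitProb j (fun _ => x)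

/-- The limit hitting probability: f(x) = min(1, x/(1-x)) for x < 1, and f(1) = 1. -/
noncomputable def fLim (x : ℝ) : ℝ := if x = 1 then 1 else min 1 (x / (1 - x))


open Classical Filter

/-- Walk from start `n`. -/
def walkPosFrom (n : ℤ) (j : ℕ) (ω : Fin j → Bool) (t : ℕ) : ℤ :=
  n + ∑ i ∈ Finset.univ.filter (fun i : Fin j => (i : ℕ) < t),
    (if ω i then (-1 : ℤ) else 1)

def hitsZeroFrom (n : ℤ) (j : ℕ) (ω : Fin j → Bool) : Prop :=
  ∃ t ≤ j, walkPosFrom n j ω t = 0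

open Classical in
noncomputable def probFrom (n : ℤ) (j : ℕ) (x : ℝ) : ℝ :=
  ∑ ω : Fin j → Bool, (∏ i, if ω i then x else 1 - x) *
    (if hitsZeroFrom n j ω then (1 : ℝ) else 0)

lemma walkPosFrom_zero (n : ℤ) (j : ℕ) (ω : Fin j → Bool) :
    walkPosFrom n j ω 0 = n := by
  simp [walkPosFrom]

lemma walkPosFrom_cons (n : ℤ) (j : ℕ) (b : Bool) (ω : Fin j → Bool) (t : ℕ) :
    walkPosFrom n (j+1) (Fin.cons b ω) (t+1)
      = walkPosFrom (n + if b then -1 else 1) j ω t := by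
  unfold walkPosFrom
  rw [Finset.sum_filter, Finset.sum_filter, Fin.sum_univ_succ]
  simp only [Fin.cons_zero, Fin.cons_succ, Fin.val_zero, Fin.val_succ]
  have h0 : ((0:ℕ) < t + 1) := Nat.succ_pos t
  rw [if_pos h0]
  have : ∀ i : Fin j, ((i:ℕ) + 1 < t + 1) = ((i:ℕ) < t) := by
    intro i; simp
  simp only [this]
  ring

lemma hitsZeroFrom_cons (n : ℤ) (j : ℕ) (b : Bool) (ω : Fin j → Bool) :
    hitsZeroFrom n (j+1) (Fin.cons b ω) ↔
      (n = 0 ∨ hitsZeroFrom (n + if b then -1 else 1) j ω) := by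
  constructor
  · rintro ⟨t, ht, hw⟩
    cases t with
    | zero => left; rwa [walkPosFrom_zero] at hw
    | succ s =>
      right; exact ⟨s, by omega, by rwa [walkPosFrom_cons] at hw⟩
  · rintro (h | ⟨t, ht, hw⟩)
    · exact ⟨0, Nat.zero_le _, by rw [walkPosFrom_zero]; exact h⟩
    · exact ⟨t+1, by omega, by rwa [walkPosFrom_cons]⟩

lemma sum_cons_split (j : ℕ) (g : (Fin (j+1) → Bool) → ℝ) :
    ∑ ω : Fin (j+1) → Bool, g ω
      = ∑ ω : Fin j → Bool, (g (Fin.cons true ω) + g (Fin.cons false ω)) := by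
  rw [← (Fin.consEquiv (fun _ : Fin (j+1) => Bool)).sum_comp g]
  rw [Fintype.sum_prod_type_right]
  congr 1; ext ω
  simp [Fin.consEquiv, Fintype.sum_bool]

lemma prod_weight_cons (j : ℕ) (b : Bool) (ω : Fin j → Bool) (x : ℝ) :
    (∏ i : Fin (j+1), if (Fin.cons b ω : Fin (j+1) → Bool) i then x else 1 - x)
      = (if b then x else 1 - x) * ∏ i : Fin j, (if ω i then x else 1 - x) := by
  rw [Fin.prod_univ_succ]
  simp

lemma weight_sum (j : ℕ) (x : ℝ) :
    ∑ ω : Fin j → Bool, (∏ i, if ω i then x else 1 - x) = 1 := by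
  induction j with
  | zero => simp
  | succ j ih =>
    rw [sum_cons_split]
    simp only [prod_weight_cons, if_true, if_false]
    rw [Finset.sum_add_distrib, ← Finset.mul_sum, ← Finset.mul_sum, ih]
    norm_num


lemma probFrom_start_zero (j : ℕ) (x : ℝ) : probFrom 0 j x = 1 := by
  unfold probFrom
  have h : ∀ ω : Fin j → Bool, hitsZeroFrom 0 j ω := fun ω =>
    ⟨0, Nat.zero_le _, walkPosFrom_zero 0 j ω⟩
  calc ∑ ω : Fin j → Bool, (∏ i, if ω i then x else 1 - x) *
      (if hitsZeroFrom 0 j ω then (1:ℝ) else 0)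
      = ∑ ω : Fin j → Bool, (∏ i, if ω i then x else 1 - x) := by
        apply Finset.sum_congr rfl
        intro ω _
        rw [if_pos (h ω), mul_one]
    _ = 1 := weight_sum j x

lemma probFrom_zero_steps (n : ℤ) (x : ℝ) :
    probFrom n 0 x = if n = 0 then 1 else 0 := by
  unfold probFrom
  rw [Fintype.sum_unique]
  have : hitsZeroFrom n 0 default ↔ n = 0 := by
    constructor
    · rintro ⟨t, ht, hw⟩
      interval_cases t
      rwa [walkPosFrom_zero] at hw
    · intro h; exact ⟨0, le_refl _, by rw [walkPosFrom_zero]; exact h⟩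
  rw [Finset.prod_of_isEmpty, one_mul]
  split_ifs with h1 h2 h2 <;> first | rfl | (exact absurd (this.mp h1) h2) | (exact absurd (this.mpr h2) h1)

lemma probFrom_succ (n : ℤ) (hn : n ≠ 0) (j : ℕ) (x : ℝ) :
    probFrom n (j+1) x = x * probFrom (n-1) j x + (1-x) * probFrom (n+1) j x := by
  unfold probFrom
  rw [sum_cons_split]
  have key : ∀ (b : Bool) (ω : Fin j → Bool),
      (if hitsZeroFrom n (j+1) (Fin.cons b ω) then (1:ℝ) else 0)
        = (if hitsZeroFrom (n + if b then -1 else 1) j ω then (1:ℝ) else 0) := by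
    intro b ω
    have := hitsZeroFrom_cons n j b ω
    by_cases h : hitsZeroFrom (n + if b then -1 else 1) j ω
    · rw [if_pos h, if_pos (this.mpr (Or.inr h))]
    · rw [if_neg h, if_neg (fun hh => (this.mp hh).elim hn h)]
  simp only [prod_weight_cons, key, if_true, if_false]
  rw [Finset.sum_add_distrib]
  have e1 : n + -1 = n - 1 := by ring
  have e2 : (if (true:Bool) = true then -(1:ℤ) else 1) = -1 := rfl
  have e3 : (if (false:Bool) = true then -(1:ℤ) else 1) = 1 := rfl
  simp only [e2, e3, e1]
  rw [Finset.mul_sum, Finset.mul_sum]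
  congr 1
  · apply Finset.sum_congr rfl; intro ω _; ring
  · apply Finset.sum_congr rfl; intro ω _; norm_num

noncomputable def Haux : ℕ → ℕ → ℝ → ℝ
  | 0, _, _ => 1
  | _+1, 0, _ => 0
  | n+1, j+1, x => x * Haux n j x + (1-x) * Haux (n+2) j x

lemma Haux_zero_start (j : ℕ) (x : ℝ) : Haux 0 j x = 1 := by simp [Haux]

lemma Haux_zero_steps (n : ℕ) (x : ℝ) : Haux (n+1) 0 x = 0 := by simp [Haux]

lemma Haux_succ (n j : ℕ) (x : ℝ) :
    Haux (n+1) (j+1) x = x * Haux n j x + (1-x) * Haux (n+2) j x := by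
  simp [Haux]

lemma probFrom_eq_Haux (j n : ℕ) (x : ℝ) :
    probFrom (n : ℤ) j x = Haux n j x := by
  induction j generalizing n with
  | zero =>
    cases n with
    | zero => rw [Nat.cast_zero, probFrom_start_zero, Haux_zero_start]
    | succ m =>
      rw [probFrom_zero_steps, Haux_zero_steps, if_neg (by exact_mod_cast Nat.succ_ne_zero m)]
  | succ j ih =>
    cases n with
    | zero => rw [Nat.cast_zero, probFrom_start_zero, Haux_zero_start]
    | succ m =>
      rw [Haux_succ, probFrom_succ _ (by exact_mod_cast Nat.succ_ne_zero m)]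
      have e1 : ((m+1 : ℕ) : ℤ) - 1 = ((m : ℕ) : ℤ) := by push_cast; ring
      have e2 : ((m+1 : ℕ) : ℤ) + 1 = ((m+2 : ℕ) : ℤ) := by push_cast; ring
      push_cast at e1 e2 ⊢
      have h1 := ih m
      have h2 := ih (m+2)
      push_cast at h1 h2
      rw [e1, e2, h1, h2]

lemma fstep_eq_Haux (j : ℕ) (x : ℝ) : fstep j x = Haux 1 j x := by
  rw [← probFrom_eq_Haux j 1 x]
  unfold fstep walkHitProb probFrom
  apply Finset.sum_congr rfl
  intro ω _
  congr 1

lemma Haux_nonneg (j n : ℕ) (x : ℝ) (hx0 : 0 ≤ x) (hx1 : x ≤ 1) :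
    0 ≤ Haux n j x := by
  induction j generalizing n with
  | zero => cases n with
    | zero => rw [Haux_zero_start]; norm_num
    | succ m => rw [Haux_zero_steps]
  | succ j ih =>
    cases n with
    | zero => rw [Haux_zero_start]; norm_num
    | succ m =>
      rw [Haux_succ]
      have := ih m
      have := ih (m+2)
      nlinarith

lemma Haux_le_one (j n : ℕ) (x : ℝ) (hx0 : 0 ≤ x) (hx1 : x ≤ 1) :
    Haux n j x ≤ 1 := by
  induction j generalizing n with
  | zero => cases n with
    | zero => rw [Haux_zero_start]
    | succ m => rw [Haux_zero_steps]; norm_num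
  | succ j ih =>
    cases n with
    | zero => rw [Haux_zero_start]
    | succ m =>
      rw [Haux_succ]
      have := ih m
      have := ih (m+2)
      nlinarith

lemma Haux_mono_succ (j n : ℕ) (x : ℝ) (hx0 : 0 ≤ x) (hx1 : x ≤ 1) :
    Haux n j x ≤ Haux n (j+1) x := by
  induction j generalizing n with
  | zero => cases n with
    | zero => rw [Haux_zero_start, Haux_zero_start]
    | succ m => rw [Haux_zero_steps]; exact Haux_nonneg 1 (m+1) x hx0 hx1
  | succ j ih =>
    cases n with
    | zero => rw [Haux_zero_start, Haux_zero_start]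
    | succ m =>
      rw [Haux_succ, Haux_succ]
      have := ih m
      have := ih (m+2)
      nlinarith

lemma Haux_mono (n : ℕ) (x : ℝ) (hx0 : 0 ≤ x) (hx1 : x ≤ 1) :
    Monotone (fun j => Haux n j x) :=
  monotone_nat_of_le_succ (fun j => Haux_mono_succ j n x hx0 hx1)

lemma Haux_supermul (a b m n : ℕ) (x : ℝ) (hx0 : 0 ≤ x) (hx1 : x ≤ 1) :
    Haux m a x * Haux n b x ≤ Haux (m+n) (a+b) x := by
  induction a generalizing m with
  | zero =>
    cases m with
    | zero =>
      rw [Haux_zero_start, one_mul, Nat.zero_add, Nat.zero_add]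
    | succ k =>
      rw [Haux_zero_steps, zero_mul]
      exact Haux_nonneg _ _ x hx0 hx1
  | succ a ih =>
    cases m with
    | zero =>
      rw [Haux_zero_start, one_mul, Nat.zero_add]
      exact Haux_mono n x hx0 hx1 (by omega)
    | succ m =>
      rw [Haux_succ]
      have key : Haux (m+1+n) (a+1+b) x
          = x * Haux (m+n) (a+b) x + (1-x) * Haux (m+n+2) (a+b) x := by
        have : m+1+n = (m+n)+1 := by omega
        rw [this]
        have : a+1+b = (a+b)+1 := by omega
        rw [this, Haux_succ]
      rw [key]
      have h1 := ih m
      have h2 : Haux (m+2) a x * Haux n b x ≤ Haux (m+n+2) (a+b) x := by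
        have := ih (m+2)
        have e : m+2+n = m+n+2 := by omega
        rwa [e] at this
      nlinarith [Haux_nonneg b n x hx0 hx1, Haux_nonneg a m x hx0 hx1,
        Haux_nonneg a (m+2) x hx0 hx1]

lemma Haux_le_ratio (j n : ℕ) (x : ℝ) (hx0 : 0 ≤ x) (hxx : x ≤ 1 - x) :
    Haux n j x ≤ (x / (1-x))^n := by
  have h1x : 0 < 1 - x := by
    rcases lt_or_eq_of_le hx0 with h | h
    · linarith
    · rw [← h] at hxx ⊢; linarith
  have hr0 : 0 ≤ x / (1-x) := div_nonneg hx0 (le_of_lt h1x)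
  induction j generalizing n with
  | zero => cases n with
    | zero => rw [Haux_zero_start, pow_zero]
    | succ m => rw [Haux_zero_steps]; positivity
  | succ j ih =>
    cases n with
    | zero => rw [Haux_zero_start, pow_zero]
    | succ m =>
      rw [Haux_succ]
      have key : x * (x/(1-x))^m + (1-x) * (x/(1-x))^(m+2) = (x/(1-x))^(m+1) := by
        have hr : x/(1-x) * (1-x) = x := div_mul_cancel₀ x (ne_of_gt h1x)
        linear_combination ((x/(1-x))^m * (x/(1-x) - 1)) * hr
      have h1 := ih m
      have h2 := ih (m+2)
      nlinarith

lemma Haux_continuous (j n : ℕ) : Continuous (fun x : ℝ => Haux n j x) := by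
  induction j generalizing n with
  | zero => cases n with
    | zero => simpa [Haux_zero_start] using continuous_const
    | succ m => simpa [Haux_zero_steps] using continuous_const
  | succ j ih =>
    cases n with
    | zero => simpa [Haux_zero_start] using continuous_const
    | succ m =>
      simp only [Haux_succ]
      exact (continuous_id.mul (ih m)).add
        ((continuous_const.sub continuous_id).mul (ih (m+2)))

lemma fstep_nonneg (j : ℕ) (x : ℝ) (hx0 : 0 ≤ x) (hx1 : x ≤ 1) : 0 ≤ fstep j x := by
  rw [fstep_eq_Haux]; exact Haux_nonneg j 1 x hx0 hx1

lemma fstep_le_one (j : ℕ) (x : ℝ) (hx0 : 0 ≤ x) (hx1 : x ≤ 1) : fstep j x ≤ 1 := by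
  rw [fstep_eq_Haux]; exact Haux_le_one j 1 x hx0 hx1

lemma fstep_mono (x : ℝ) (hx0 : 0 ≤ x) (hx1 : x ≤ 1) :
    Monotone (fun j => fstep j x) := by
  have : (fun j => fstep j x) = fun j => Haux 1 j x := by
    funext j; exact fstep_eq_Haux j x
  rw [this]
  exact Haux_mono 1 x hx0 hx1

lemma fstep_ge_x (j : ℕ) (x : ℝ) (hx0 : 0 ≤ x) (hx1 : x ≤ 1) (hj : 1 ≤ j) :
    x ≤ fstep j x := by
  obtain ⟨m, rfl⟩ : ∃ m, j = m + 1 := ⟨j - 1, by omega⟩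
  rw [fstep_eq_Haux, Haux_succ, Haux_zero_start, mul_one]
  nlinarith [Haux_nonneg m 2 x hx0 hx1]

lemma fLim_eq_min (x : ℝ) (hx1 : x < 1) : fLim x = min 1 (x / (1-x)) := by
  rw [fLim, if_neg (ne_of_lt hx1)]

lemma fstep_le_fLim (j : ℕ) (x : ℝ) (hx0 : 0 < x) (hx1 : x ≤ 1) :
    fstep j x ≤ fLim x := by
  rcases eq_or_lt_of_le hx1 with h | h
  · subst h
    rw [fLim, if_pos rfl]
    exact fstep_le_one j 1 (le_of_lt hx0) hx1
  · rw [fLim_eq_min x h]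
    rcases le_total (x / (1-x)) 1 with hr | hr
    · rw [min_eq_right hr]
      have hxx : x ≤ 1 - x := by
        rw [div_le_one (by linarith)] at hr; exact hr
      have := Haux_le_ratio j 1 x (le_of_lt hx0) hxx
      rw [pow_one] at this
      rw [fstep_eq_Haux]; exact this
    · rw [min_eq_left hr]
      exact fstep_le_one j x (le_of_lt hx0) hx1

lemma fstep_supermul (a b : ℕ) (x : ℝ) (hx0 : 0 ≤ x) (hx1 : x ≤ 1) :
    x + (1-x) * (fstep a x * fstep b x) ≤ fstep (a+b+1) x := by
  rw [fstep_eq_Haux, fstep_eq_Haux, fstep_eq_Haux, Haux_succ, Haux_zero_start, mul_one]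
  have h := Haux_supermul a b 1 1 x hx0 hx1
  nlinarith

lemma fstep_tendsto (x : ℝ) (hx0 : 0 < x) (hx1 : x ≤ 1) :
    Tendsto (fun j => fstep j x) atTop (nhds (fLim x)) := by
  have hmono := fstep_mono x (le_of_lt hx0) hx1
  have hbdd : BddAbove (Set.range fun j => fstep j x) := by
    refine ⟨1, ?_⟩
    rintro y ⟨j, rfl⟩
    exact fstep_le_one j x (le_of_lt hx0) hx1
  have htend := tendsto_atTop_ciSup hmono hbdd
  set L := ⨆ j, fstep j x with hLdef
  have hL1 : L ≤ 1 := ciSup_le (fun j => fstep_le_one j x (le_of_lt hx0) hx1)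
  have hLx : x ≤ L := le_trans (fstep_ge_x 1 x (le_of_lt hx0) hx1 le_rfl)
    (le_ciSup hbdd 1)
  have hsub : Tendsto (fun j : ℕ => fstep (j+j+1) x) atTop (nhds L) :=
    htend.comp (tendsto_atTop_mono (fun j => by show j ≤ j + j + 1; omega) tendsto_id)
  have h2 : Tendsto (fun j => x + (1-x) * (fstep j x * fstep j x)) atTop
      (nhds (x + (1-x) * (L*L))) :=
    tendsto_const_nhds.add (tendsto_const_nhds.mul (htend.mul htend))
  have hineq : x + (1-x) * (L*L) ≤ L :=
    le_of_tendsto_of_tendsto' h2 hsub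
      (fun j => fstep_supermul j j x (le_of_lt hx0) hx1)
  have hfin : fLim x = L := by
    rcases eq_or_lt_of_le hx1 with h | h
    · subst h
      rw [fLim, if_pos rfl]
      nlinarith
    · rw [fLim_eq_min x h]
      have h1x : 0 < 1 - x := by linarith
      apply le_antisymm _ _
      · rcases le_total (x / (1-x)) 1 with hr | hr
        · rw [min_eq_right hr]
          rw [div_le_iff₀ h1x]
          rw [div_le_one h1x] at hr
          nlinarith
        · rw [min_eq_left hr]
          rw [le_div_iff₀ h1x] at hr
          by_contra hc
          push_neg at hc
          have heq : ((1-x)*L - x)*(L-1) = x + (1-x)*(L*L) - L := by ring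
          have hf : ((1-x)*L - x)*(L-1) ≤ 0 := by rw [heq]; linarith
          have h3 : 0 ≤ (1-x)*L - x := by
            rcases le_or_gt 0 ((1-x)*L - x) with h4 | h4
            · exact h4
            · exfalso
              nlinarith [mul_pos (by linarith : (0:ℝ) < x - (1-x)*L)
                (by linarith : (0:ℝ) < 1 - L)]
          have h5 : (1-x)*L < (1-x)*1 := mul_lt_mul_of_pos_left hc h1x
          linarith
      · exact ciSup_le (fun j => by
          rw [← fLim_eq_min x h]; exact fstep_le_fLim j x hx0 hx1)
  rw [hfin]
  exact htend

lemma fstep_continuous (j : ℕ) : Continuous (fun x : ℝ => fstep j x) := by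
  have : (fun x : ℝ => fstep j x) = fun x => Haux 1 j x := by
    funext x; exact fstep_eq_Haux j x
  rw [this]
  exact Haux_continuous j 1

lemma dini_aux {K : Set ℝ} (hK : IsCompact K) (F : ℕ → ℝ → ℝ) (f : ℝ → ℝ)
    (hFc : ∀ n, Continuous (F n)) (hfc : ContinuousOn f K)
    (hmono : ∀ x ∈ K, Monotone (fun n => F n x))
    (htend : ∀ x ∈ K, Tendsto (fun n => F n x) atTop (nhds (f x)))
    (ε : ℝ) (hε : 0 < ε) : ∃ N, ∀ x ∈ K, f x - F N x < ε := by
  haveI : CompactSpace K := isCompact_iff_compactSpace.mp hK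
  set U : ℕ → Set K := fun n => (fun y : K => f y - F n y) ⁻¹' (Set.Iio ε) with hU
  have hUo : ∀ n, IsOpen (U n) := by
    intro n
    have hc : Continuous (fun y : K => f y - F n y) :=
      hfc.restrict.sub ((hFc n).comp continuous_subtype_val)
    exact hc.isOpen_preimage _ isOpen_Iio
  have hcover : (Set.univ : Set K) ⊆ ⋃ n, U n := by
    intro y _
    have hev : ∀ᶠ n in atTop, f ↑y - ε < F n ↑y :=
      (htend y y.2).eventually (eventually_gt_nhds (by linarith : f ↑y - ε < f ↑y))
    obtain ⟨n, hn⟩ := hev.exists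
    exact Set.mem_iUnion.mpr ⟨n, by simp [hU, Set.mem_preimage]; linarith⟩
  obtain ⟨t, ht⟩ := isCompact_univ.elim_finite_subcover U hUo hcover
  refine ⟨t.sup id, fun x hx => ?_⟩
  have hmem := ht (Set.mem_univ (⟨x, hx⟩ : K))
  simp only [Set.mem_iUnion] at hmem
  obtain ⟨n, hn, hmem⟩ := hmem
  have h1 : f x - F n x < ε := hmem
  have h2 : F n x ≤ F (t.sup id) x := hmono x hx (Finset.le_sup (f := id) hn)
  linarith

lemma fLim_pos (x : ℝ) (hx0 : 0 < x) (hx1 : x ≤ 1) : 0 < fLim x := by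
  rcases eq_or_lt_of_le hx1 with h | h
  · subst h; rw [fLim, if_pos rfl]; norm_num
  · rw [fLim_eq_min x h]
    exact lt_min one_pos (div_pos hx0 (by linarith))

lemma fLim_le_ratio (x : ℝ) (hx1 : x < 1) : fLim x ≤ x / (1-x) := by
  rw [fLim_eq_min x hx1]; exact min_le_right _ _

lemma fLim_ge (δ x : ℝ) (hδ0 : 0 < δ) (hδ1 : δ < 1) (hδx : δ ≤ x) (hx1 : x ≤ 1) :
    min 1 (δ/(1-δ)) ≤ fLim x := by
  rcases eq_or_lt_of_le hx1 with h | h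
  · subst h; rw [fLim, if_pos rfl]; exact min_le_left _ _
  · rw [fLim_eq_min x h]
    refine min_le_min le_rfl ?_
    rw [div_le_div_iff₀ (by linarith) (by linarith)]
    nlinarith

lemma fLim_continuousOn (δ : ℝ) (hδ0 : 0 < δ) (hδ1 : δ ≤ 1/2) :
    ContinuousOn fLim (Set.Icc δ 1) := by
  intro y hy
  rcases eq_or_lt_of_le hy.2 with h | h
  · -- y = 1 : fLim is locally equal to 1 on Icc δ 1 near 1
    subst h
    have hev : ∀ᶠ z in nhdsWithin 1 (Set.Icc δ 1), fLim z = 1 := by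
      have hmem : Set.Ioi (1/2 : ℝ) ∈ nhdsWithin 1 (Set.Icc δ 1) :=
        nhdsWithin_le_nhds (isOpen_Ioi.mem_nhds (by norm_num))
      have hself : Set.Icc δ 1 ∈ nhdsWithin 1 (Set.Icc δ 1) := self_mem_nhdsWithin
      filter_upwards [hmem, hself] with z hz1 hz2
      rcases eq_or_lt_of_le hz2.2 with h | h
      · subst h; rw [fLim, if_pos rfl]
      · rw [fLim_eq_min z h]
        refine min_eq_left ?_
        rw [le_div_iff₀ (by linarith)]
        simp only [Set.mem_Ioi] at hz1
        linarith
    have h1 : fLim (1:ℝ) = 1 := by rw [fLim, if_pos rfl]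
    exact (continuousWithinAt_const (b := (1:ℝ))).congr_of_eventuallyEq
      (hev.mono fun z hz => by rw [hz]) h1
  · -- y < 1 : fLim is locally min 1 (x/(1-x))
    apply ContinuousAt.continuousWithinAt
    have hev : ∀ᶠ z in nhds y, fLim z = min 1 (z/(1-z)) := by
      filter_upwards [isOpen_Iio.mem_nhds h] with z hz
      exact fLim_eq_min z hz
    have hc : ContinuousAt (fun z : ℝ => min 1 (z/(1-z))) y := by
      have h1 : ContinuousAt (fun z : ℝ => z/(1-z)) y := by
        apply ContinuousAt.div continuousAt_id (continuousAt_const.sub continuousAt_id)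
        exact sub_ne_zero_of_ne (ne_of_gt h)
      exact continuousAt_const.min h1
    exact hc.congr (hev.mono fun z hz => hz.symm)

/-- f_j is nondecreasing in j, converges pointwise to f on (0,1], and for every ε > 0
there is k such that f_j(x) > (1-ε)·f(x) for all j > k and all x ∈ (0,1]. -/
theorem walk_hitting_uniform_convergence :
    (∀ x ∈ Set.Icc (0 : ℝ) 1, Monotone fun j => fstep j x) ∧
      (∀ x ∈ Set.Ioc (0 : ℝ) 1,
        Filter.Tendsto (fun j => fstep j x) Filter.atTop (nhds (fLim x))) ∧
      (∀ ε : ℝ, 0 < ε → ∃ k : ℕ, ∀ j > k, ∀ x ∈ Set.Ioc (0 : ℝ) 1,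
        (1 - ε) * fLim x < fstep j x) := by
  refine ⟨fun x hx => fstep_mono x hx.1 hx.2,
    fun x hx => fstep_tendsto x hx.1 hx.2, ?_⟩
  intro ε hε
  set δ : ℝ := min (ε/2) (1/2) with hδ
  have hδ0 : 0 < δ := lt_min (by linarith) (by norm_num)
  have hδhalf : δ ≤ 1/2 := min_le_right _ _
  have hδε : δ < ε := lt_of_le_of_lt (min_le_left _ _) (by linarith)
  have hδ1 : δ < 1 := by linarith
  set c : ℝ := min 1 (δ/(1-δ)) with hc
  have hc0 : 0 < c := lt_min one_pos (div_pos hδ0 (by linarith))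
  obtain ⟨N, hN⟩ := dini_aux (isCompact_Icc (a := δ) (b := 1))
    (fun j x => fstep j x) fLim fstep_continuous
    (fLim_continuousOn δ hδ0 hδhalf)
    (fun x hx => fstep_mono x (by linarith [hx.1]) hx.2)
    (fun x hx => fstep_tendsto x (by linarith [hx.1]) hx.2)
    (ε * c) (mul_pos hε hc0)
  refine ⟨N, fun j hj x hx => ?_⟩
  obtain ⟨hx0, hx1⟩ := hx
  rcases le_or_gt x δ with hxd | hxd
  · -- small x : fstep j x ≥ x beats (1-ε) * fLim x
    have hx12 : x ≤ 1/2 := le_trans hxd hδhalf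
    have hxlt1 : x < 1 := by linarith
    have hfx : x ≤ fstep j x := fstep_ge_x j x (le_of_lt hx0) hx1 (by omega)
    rcases le_or_gt (1 - ε) 0 with hε1 | hε1
    · have : (1 - ε) * fLim x ≤ 0 :=
        mul_nonpos_of_nonpos_of_nonneg hε1 (le_of_lt (fLim_pos x hx0 hx1))
      linarith
    · have hkey : (1 - ε) * (x/(1-x)) < x := by
        rw [← mul_div_assoc, div_lt_iff₀ (by linarith)]
        have hxε : x < ε := lt_of_le_of_lt hxd hδε
        nlinarith
      have := mul_le_mul_of_nonneg_left (fLim_le_ratio x hxlt1) (le_of_lt hε1)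
      linarith
  · -- x ∈ [δ, 1] : use uniform convergence
    have hxIcc : x ∈ Set.Icc δ 1 := ⟨le_of_lt hxd, hx1⟩
    have h1 : fLim x - fstep N x < ε * c := hN x hxIcc
    have h2 : fstep N x ≤ fstep j x :=
      fstep_mono x (le_of_lt hx0) hx1 (le_of_lt hj)
    have h3 : c ≤ fLim x := fLim_ge δ x hδ0 hδ1 (le_of_lt hxd) hx1
    have h4 : ε * c ≤ ε * fLim x := mul_le_mul_of_nonneg_left h3 (le_of_lt hε)
    nlinarith
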